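/- For α ∈ ℝ \ ℤ, with B_α(s, θ₁, θ₂) = −(e^{-iα(θ₁−θ₂) − iα₁₂}/(4π²))·(sin(π|α|)e^{-s|α|} + sin(απ)·((e^{-s} + cos(θ₁−θ₂))sinh(sα) + i sin(θ₁−θ₂)cosh(sα))/(cosh s + cos(θ₁−θ₂))), the integral ∫₀^∞ |B_α(s,θ₁,θ₂)| ds is finite and bounded uniformly in θ₁, θ₂ (for fixed α with 0 < |α| < 1, say). -/

import Mathlib

open Real MeasureTheory Set Filter Topology

lemma aux_sinh_le_mul_exp {x : ℝ} (hx : 0 ≤ x) : Real.sinh x ≤ x * Real.exp x := by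
  rw [Real.sinh_eq]
  have h2 : Real.exp (-x) * Real.exp (-x) = Real.exp (-(2*x)) := by
    rw [← Real.exp_add]; ring_nf
  have h3 : -(2*x) + 1 ≤ Real.exp (-(2*x)) := Real.add_one_le_exp _
  have h4 : Real.exp x * Real.exp (-x) = 1 := by
    rw [← Real.exp_add]; simp
  nlinarith [Real.exp_pos x, Real.exp_pos (-x), Real.one_le_exp hx]

lemma aux_sinh_le_half_exp (x : ℝ) : Real.sinh x ≤ Real.exp x / 2 := by
  rw [Real.sinh_eq]
  have := Real.exp_pos (-x)
  linarith

lemma aux_cosh_le_exp {x : ℝ} (hx : 0 ≤ x) : Real.cosh x ≤ Real.exp x := by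
  rw [Real.cosh_eq]
  have h1 : Real.exp (-x) ≤ 1 := Real.exp_le_one_iff.2 (by linarith)
  have h2 : 1 ≤ Real.exp x := Real.one_le_exp hx
  linarith

lemma aux_cosh_lb (s : ℝ) (hs : 0 ≤ s) : s^2/2 + 1 ≤ Real.cosh s := by
  have h1 : Real.cosh s = 2 * Real.sinh (s/2)^2 + 1 := by
    have := Real.cosh_two_mul (s/2)
    have h2 := Real.cosh_sq (s/2)
    rw [show 2 * (s/2) = s by ring] at this
    linarith
  have h3 : s/2 ≤ Real.sinh (s/2) := Real.self_le_sinh_iff.2 (by linarith)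
  nlinarith [Real.sinh_nonneg_iff.2 (by linarith : (0:ℝ) ≤ s/2)]

lemma aux_cosh_lb2 (s : ℝ) : Real.exp s / 2 ≤ Real.cosh s := by
  rw [Real.cosh_eq]
  have := Real.exp_pos (-s)
  linarith

/-- integral of `exp (-r s)` on `(0,∞)` -/
lemma aux_exp_integral {r : ℝ} (hr : 0 < r) :
    IntegrableOn (fun s : ℝ => Real.exp (-r*s)) (Ioi 0) ∧
    (∫ s in Ioi (0:ℝ), Real.exp (-r*s)) = 1/r := by
  have hint := exp_neg_integrableOn_Ioi 0 hr
  refine ⟨hint, ?_⟩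
  have hderiv : ∀ x ∈ Ici (0:ℝ), HasDerivAt (fun x => -Real.exp (-r*x) / r) (Real.exp (-r*x)) x := by
    intro x _
    simpa [hr.ne'] using ((hasDerivAt_id x).const_mul r).neg.exp.neg.div_const r
  have htend : Tendsto (fun x => -Real.exp (-r*x) / r) atTop (𝓝 (-0/r)) := by
    refine Tendsto.div_const (Tendsto.neg ?_) _
    exact Real.tendsto_exp_atBot.comp (tendsto_id.const_mul_atTop_of_neg (neg_neg_iff_pos.2 hr))
  have := integral_Ioi_of_hasDerivAt_of_tendsto' hderiv hint htend
  rw [this]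
  simp [hr.ne']
  ring

/-- integral of `√(2δ)/(s²/2+δ)` on `(0,∞)` is at most `π` -/
lemma aux_arctan_integral {δ : ℝ} (hδ : 0 ≤ δ) :
    IntegrableOn (fun s : ℝ => Real.sqrt (2*δ) * (s^2/2 + δ)⁻¹) (Ioi 0) ∧
    (∫ s in Ioi (0:ℝ), Real.sqrt (2*δ) * (s^2/2 + δ)⁻¹) ≤ π := by
  rcases eq_or_lt_of_le hδ with h0 | h0
  · simp [← h0, Real.pi_nonneg]
  · set k := Real.sqrt (2*δ) with hk
    have hkpos : 0 < k := Real.sqrt_pos.2 (by linarith)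
    have hk2 : k^2 = 2*δ := Real.sq_sqrt (by linarith)
    have hδk : δ = k^2/2 := by linarith
    have hderiv : ∀ x ∈ Ici (0:ℝ),
        HasDerivAt (fun x => 2 * Real.arctan (x/k)) (k * (x^2/2 + δ)⁻¹) x := by
      intro x _
      have h1 : HasDerivAt (fun x : ℝ => x/k) (1/k) x := (hasDerivAt_id x).div_const k
      have h2 := (Real.hasDerivAt_arctan (x/k)).comp x h1
      have h3 := h2.const_mul (2:ℝ)
      refine h3.congr_deriv ?_
      rw [hδk]
      have hne : x^2/2 + k^2/2 ≠ 0 := by positivity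
      have hne2 : 1 + (x/k)^2 ≠ 0 := by positivity
      field_simp
      ring
    have hpos : ∀ x ∈ Ioi (0:ℝ), 0 ≤ k * (x^2/2 + δ)⁻¹ := by
      intro x _
      positivity
    have htend : Tendsto (fun x => 2 * Real.arctan (x/k)) atTop (𝓝 π) := by
      have h1 : Tendsto (fun x : ℝ => x/k) atTop atTop := tendsto_id.atTop_div_const hkpos
      have h2 := (Real.tendsto_arctan_atTop.mono_right nhdsWithin_le_nhds).comp h1
      have h3 := h2.const_mul (2:ℝ)
      have : 2 * (π/2) = π := by ring
      rw [← this]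
      exact h3
    have hint := integrableOn_Ioi_deriv_of_nonneg' hderiv hpos htend
    have hval := integral_Ioi_of_hasDerivAt_of_nonneg' hderiv hpos htend
    have heq : (fun s : ℝ => Real.sqrt (2*δ) * (s^2/2 + δ)⁻¹)
        = fun x : ℝ => k * (x^2/2 + δ)⁻¹ := by rfl
    rw [heq]
    refine ⟨hint, ?_⟩
    rw [hval]
    simp [Real.arctan_zero]

set_option maxHeartbeats 1000000 in
/-- key pointwise bound for the fraction part -/
lemma aux_frac_bound {a s δ σ1 D : ℝ} (ha0 : 0 < a) (ha1 : a < 1) (hs : 0 < s)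
    (hδ : 0 ≤ δ) (hδ2 : δ ≤ 2) (hσ0 : 0 ≤ σ1) (hσ1 : σ1 ≤ 1) (hσ2 : σ1^2 ≤ 2*δ)
    (hD1 : s^2/2 + δ ≤ D) (hD2 : Real.exp s / 2 - 1 + δ ≤ D) :
    ((s + δ) * Real.sinh (s*a) + σ1 * Real.cosh (s*a)) / D
      ≤ (4*Real.exp 4 + 8 + 4/(1-a)) * Real.exp (-((1-a)/2)*s)
        + Real.exp 2 * (Real.sqrt (2*δ) * (s^2/2 + δ)⁻¹) := by
  have hsa : 0 ≤ s * a := by positivity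
  have hD0 : 0 < D := lt_of_lt_of_le (by positivity) hD1
  have hsinh0 : 0 ≤ Real.sinh (s*a) := Real.sinh_nonneg_iff.2 hsa
  have hcosh0 : 0 < Real.cosh (s*a) := Real.cosh_pos (s*a)
  have hE0 : 0 < Real.exp (s*a) := Real.exp_pos _
  have hsinh1 : Real.sinh (s*a) ≤ (s*a) * Real.exp (s*a) := aux_sinh_le_mul_exp hsa
  have hsinh2 : Real.sinh (s*a) ≤ Real.exp (s*a) / 2 := aux_sinh_le_half_exp _
  have hcosh1 : Real.cosh (s*a) ≤ Real.exp (s*a) := aux_cosh_le_exp hsa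
  have hσδ : σ1 ≤ Real.sqrt (2*δ) := by
    calc σ1 = Real.sqrt (σ1^2) := (Real.sqrt_sq hσ0).symm
    _ ≤ Real.sqrt (2*δ) := Real.sqrt_le_sqrt hσ2
  have hp3 : 0 ≤ Real.exp 2 * (Real.sqrt (2*δ) * (s^2/2 + δ)⁻¹) := by positivity
  have hb : 0 < 1 - a := by linarith
  have hM1 : 0 < 4/(1-a) := by positivity
  rcases le_or_gt s 2 with hs2 | hs2
  · -- small s
    have hsa2 : s*a ≤ 2 := by nlinarith
    have hE2 : Real.exp (s*a) ≤ Real.exp 2 := Real.exp_le_exp.2 hsa2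
    have hsplit : ((s + δ) * Real.sinh (s*a) + σ1 * Real.cosh (s*a)) / D
        = s * Real.sinh (s*a) / D + δ * Real.sinh (s*a) / D + σ1 * Real.cosh (s*a) / D := by
      field_simp
    rw [hsplit]
    have ht1 : s * Real.sinh (s*a) / D ≤ 2 * Real.exp 2 := by
      rw [div_le_iff₀ hD0]
      have h2 : a * Real.exp (s*a) ≤ Real.exp 2 := by nlinarith
      have h3 : s^2 ≤ 2*D := by nlinarith
      calc s * Real.sinh (s*a) ≤ s^2 * (a * Real.exp (s*a)) := by nlinarith
      _ ≤ (2*D) * Real.exp 2 := mul_le_mul h3 h2 (by positivity) (by positivity)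
      _ = 2*Real.exp 2 * D := by ring
    have ht2 : δ * Real.sinh (s*a) / D ≤ 2 * Real.exp 2 := by
      rw [div_le_iff₀ hD0]
      have h1 : Real.sinh (s*a) ≤ 2*Real.exp 2 := by
        calc Real.sinh (s*a) ≤ (s*a) * Real.exp (s*a) := hsinh1
        _ ≤ 2*Real.exp 2 := mul_le_mul hsa2 hE2 hE0.le (by norm_num)
      have hδD : δ ≤ D := by nlinarith [sq_nonneg s]
      calc δ * Real.sinh (s*a) ≤ δ * (2*Real.exp 2) := mul_le_mul_of_nonneg_left h1 hδ
      _ ≤ D * (2*Real.exp 2) := mul_le_mul_of_nonneg_right hδD (by positivity)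
      _ = 2*Real.exp 2 * D := by ring
    have ht3 : σ1 * Real.cosh (s*a) / D ≤ Real.exp 2 * (Real.sqrt (2*δ) * (s^2/2 + δ)⁻¹) := by
      have h1 : σ1 * Real.cosh (s*a) ≤ Real.sqrt (2*δ) * Real.exp 2 :=
        mul_le_mul hσδ (hcosh1.trans hE2) hcosh0.le (Real.sqrt_nonneg _)
      have h2 : σ1 * Real.cosh (s*a) / D ≤ Real.sqrt (2*δ) * Real.exp 2 / (s^2/2 + δ) :=
        div_le_div₀ (by positivity) h1 (by positivity) hD1
      calc σ1 * Real.cosh (s*a) / D ≤ Real.sqrt (2*δ) * Real.exp 2 / (s^2/2 + δ) := h2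
      _ = Real.exp 2 * (Real.sqrt (2*δ) * (s^2/2 + δ)⁻¹) := by ring
    have hfold : 4 * Real.exp 2 ≤ (4*Real.exp 4 + 8 + 4/(1-a)) * Real.exp (-((1-a)/2)*s) := by
      have h1 : Real.exp (-2:ℝ) ≤ Real.exp (-((1-a)/2)*s) := by
        apply Real.exp_le_exp.2
        have h0 : (1-a)*s ≤ 1*2 := mul_le_mul (by linarith) hs2 hs.le zero_le_one
        linarith
      have h3 : 4*Real.exp 4 * Real.exp (-2:ℝ)
          ≤ (4*Real.exp 4 + 8 + 4/(1-a)) * Real.exp (-((1-a)/2)*s) :=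
        mul_le_mul (by linarith) h1 (Real.exp_pos _).le (by positivity)
      have h4 : 4*Real.exp 4 * Real.exp (-2:ℝ) = 4 * Real.exp 2 := by
        rw [mul_assoc, ← Real.exp_add]; norm_num
      linarith
    linarith
  · -- large s
    have he2 : (4:ℝ) ≤ Real.exp 2 := by
      have h1 : (2:ℝ) ≤ Real.exp 1 := by
        have := Real.add_one_le_exp (1:ℝ); linarith
      have h2 : Real.exp 1 * Real.exp 1 = Real.exp 2 := by rw [← Real.exp_add]; norm_num
      nlinarith
    have hes : Real.exp 2 ≤ Real.exp s := Real.exp_le_exp.2 hs2.le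
    have hDe : Real.exp s / 4 ≤ D := by
      have : (4:ℝ) ≤ Real.exp s := le_trans he2 hes
      linarith
    have hnum : (s + δ) * Real.sinh (s*a) + σ1 * Real.cosh (s*a) ≤ (s/2 + 2) * Real.exp (s*a) := by
      have h1 : (s + δ) * Real.sinh (s*a) ≤ (s + 2) * (Real.exp (s*a)/2) :=
        mul_le_mul (by linarith) hsinh2 hsinh0 (by linarith)
      have h2 : σ1 * Real.cosh (s*a) ≤ 1 * Real.exp (s*a) :=
        mul_le_mul hσ1 hcosh1 hcosh0.le zero_le_one
      nlinarith
    have hfrac : ((s + δ) * Real.sinh (s*a) + σ1 * Real.cosh (s*a)) / D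
        ≤ (s/2 + 2) * Real.exp (s*a) / (Real.exp s / 4) :=
      div_le_div₀ (by positivity) hnum (by positivity) hDe
    have heq : (s/2 + 2) * Real.exp (s*a) / (Real.exp s / 4)
        = (2*s + 8) * Real.exp (-(1-a)*s) := by
      rw [show -(1-a)*s = s*a + -s by ring, Real.exp_add, Real.exp_neg]
      have := (Real.exp_pos s).ne'
      field_simp
      ring
    set u := Real.exp (-((1-a)/2)*s) with hudef
    have hu : Real.exp (-(1-a)*s) = u * u := by
      rw [hudef, ← Real.exp_add]; ring_nf
    have hu0 : 0 < u := Real.exp_pos _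
    have hu1 : u ≤ 1 := Real.exp_le_one_iff.2 (by nlinarith)
    have hkey : ((1-a)/2)*s ≤ u⁻¹ := by
      rw [show u⁻¹ = Real.exp (((1-a)/2)*s) by rw [hudef, ← Real.exp_neg]; ring_nf]
      have := Real.add_one_le_exp (((1-a)/2)*s)
      linarith
    have hsu : 2*s*u ≤ 4/(1-a) := by
      rw [le_div_iff₀ hb]
      have h1 : ((1-a)/2)*s*u ≤ u⁻¹*u := mul_le_mul_of_nonneg_right hkey hu0.le
      rw [inv_mul_cancel₀ hu0.ne'] at h1
      nlinarith
    have hmain : (2*s + 8) * Real.exp (-(1-a)*s) ≤ (8 + 4/(1-a)) * u := by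
      rw [hu]
      have h1 : (2*s + 8) * u ≤ 8 + 4/(1-a) := by nlinarith
      calc (2*s + 8) * (u * u) = ((2*s + 8) * u) * u := by ring
      _ ≤ (8 + 4/(1-a)) * u := mul_le_mul_of_nonneg_right h1 hu0.le
    have hM : (8 + 4/(1-a)) * u ≤ (4*Real.exp 4 + 8 + 4/(1-a)) * u :=
      mul_le_mul_of_nonneg_right (by nlinarith [Real.exp_pos (4:ℝ)]) hu0.le
    calc ((s + δ) * Real.sinh (s*a) + σ1 * Real.cosh (s*a)) / D
        ≤ (2*s + 8) * Real.exp (-(1-a)*s) := by rw [← heq]; exact hfrac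
    _ ≤ (4*Real.exp 4 + 8 + 4/(1-a)) * u := le_trans hmain hM
    _ ≤ _ := by linarith

set_option maxHeartbeats 1000000 in
/-- Uniform `L¹`-in-`s` bound for the kernel weight `B_α`: for `0 < |α| < 1`,
`∫₀^∞ |B_α(s,θ₁,θ₂)| ds` is finite, uniformly in `θ₁, θ₂ ∈ [0,2π]`. -/
theorem stmt14 (α α₁₂ : ℝ) (hα0 : 0 < |α|) (hα1 : |α| < 1) :
    ∃ C > (0:ℝ), ∀ θ₁ ∈ Set.Icc (0:ℝ) (2*π), ∀ θ₂ ∈ Set.Icc (0:ℝ) (2*π),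
      IntegrableOn
        (fun s : ℝ =>
          ‖-(Complex.exp (-Complex.I * α * (θ₁ - θ₂) - Complex.I * α₁₂) / (4 * (π:ℂ)^2)) *
            ((Real.sin (π * |α|) * Real.exp (-s * |α|) : ℝ) +
              (Real.sin (α * π) : ℝ) *
                (((Real.exp (-s) + Real.cos (θ₁ - θ₂)) * Real.sinh (s * α) : ℝ) +
                  Complex.I * (Real.sin (θ₁ - θ₂) * Real.cosh (s * α) : ℝ)) /
                ((Real.cosh s + Real.cos (θ₁ - θ₂) : ℝ) : ℂ))‖)
        (Set.Ioi (0:ℝ)) ∧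
      (∫ s in Set.Ioi (0:ℝ),
          ‖-(Complex.exp (-Complex.I * α * (θ₁ - θ₂) - Complex.I * α₁₂) / (4 * (π:ℂ)^2)) *
            ((Real.sin (π * |α|) * Real.exp (-s * |α|) : ℝ) +
              (Real.sin (α * π) : ℝ) *
                (((Real.exp (-s) + Real.cos (θ₁ - θ₂)) * Real.sinh (s * α) : ℝ) +
                  Complex.I * (Real.sin (θ₁ - θ₂) * Real.cosh (s * α) : ℝ)) /
                ((Real.cosh s + Real.cos (θ₁ - θ₂) : ℝ) : ℂ))‖) ≤ C := by
  set a : ℝ := |α| with ha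
  have hb : 0 < 1 - a := by linarith
  set M : ℝ := 4*Real.exp 4 + 8 + 4/(1-a) with hM
  have hMpos : 0 < M := by positivity
  set C : ℝ := 1/a + M * (2/(1-a)) + Real.exp 2 * π + 1 with hC
  have hCpos : 0 < C := by positivity
  refine ⟨C, hCpos, ?_⟩
  intro θ₁ _ θ₂ _
  set c : ℝ := Real.cos (θ₁ - θ₂) with hc
  set σ : ℝ := Real.sin (θ₁ - θ₂) with hσ
  have hc1 : -1 ≤ c := Real.neg_one_le_cos _
  have hc2 : c ≤ 1 := Real.cos_le_one _
  have hδ0 : 0 ≤ 1 + c := by linarith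
  have hδ2 : 1 + c ≤ 2 := by linarith
  have hσ1 : |σ| ≤ 1 := abs_le.2 ⟨Real.neg_one_le_sin _, Real.sin_le_one _⟩
  have hσ2 : |σ|^2 ≤ 2*(1+c) := by
    rw [sq_abs]
    nlinarith [Real.sin_sq_add_cos_sq (θ₁ - θ₂)]
  -- denominator positivity
  have hDpos : ∀ s : ℝ, 0 < s → 0 < Real.cosh s + c := by
    intro s hs
    have := aux_cosh_lb s hs.le
    nlinarith
  -- the majorant
  set g : ℝ → ℝ := fun s => Real.exp (-a*s) + M * Real.exp (-((1-a)/2)*s)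
      + Real.exp 2 * (Real.sqrt (2*(1+c)) * (s^2/2 + (1+c))⁻¹) with hg
  have hint1 := (aux_exp_integral hα0).1
  have hval1 := (aux_exp_integral hα0).2
  have hint2 := (aux_exp_integral (show (0:ℝ) < (1-a)/2 by linarith)).1
  have hval2 := (aux_exp_integral (show (0:ℝ) < (1-a)/2 by linarith)).2
  have hint3 := (aux_arctan_integral hδ0).1
  have hval3 := (aux_arctan_integral hδ0).2
  have hg_int : IntegrableOn g (Set.Ioi 0) := by
    apply Integrable.add
    apply Integrable.add
    · exact hint1
    · exact hint2.const_mul M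
    · exact hint3.const_mul (Real.exp 2)
  -- pointwise bound
  have hpt : ∀ s ∈ Set.Ioi (0:ℝ),
      ‖-(Complex.exp (-Complex.I * α * (θ₁ - θ₂) - Complex.I * α₁₂) / (4 * (π:ℂ)^2)) *
            ((Real.sin (π * |α|) * Real.exp (-s * |α|) : ℝ) +
              (Real.sin (α * π) : ℝ) *
                (((Real.exp (-s) + Real.cos (θ₁ - θ₂)) * Real.sinh (s * α) : ℝ) +
                  Complex.I * (Real.sin (θ₁ - θ₂) * Real.cosh (s * α) : ℝ)) /
                ((Real.cosh s + Real.cos (θ₁ - θ₂) : ℝ) : ℂ))‖ ≤ g s := by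
    intro s hs
    rw [Set.mem_Ioi] at hs
    have hD0 := hDpos s hs
    have hD1 : s^2/2 + (1+c) ≤ Real.cosh s + c := by
      have := aux_cosh_lb s hs.le; linarith
    have hD2 : Real.exp s / 2 - 1 + (1+c) ≤ Real.cosh s + c := by
      have := aux_cosh_lb2 s; linarith
    -- prefactor
    have hA : ‖-(Complex.exp (-Complex.I * α * (θ₁ - θ₂) - Complex.I * α₁₂) / (4 * (π:ℂ)^2))‖ ≤ 1 := by
      rw [norm_neg, norm_div]
      have h1 : ‖Complex.exp (-Complex.I * ↑α * (↑θ₁ - ↑θ₂) - Complex.I * ↑α₁₂)‖ = 1 := by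
        rw [Complex.norm_exp]
        norm_num [Complex.sub_re, Complex.mul_re, Complex.mul_im, Complex.I_re, Complex.I_im,
          Complex.ofReal_re, Complex.ofReal_im, Complex.neg_re, Complex.neg_im,
          Complex.sub_im, Complex.ofReal_im]
      have h2 : ‖(4 * (π:ℂ)^2)‖ = 4*π^2 := by
        rw [show (4:ℂ)*(π:ℂ)^2 = ((4*π^2:ℝ):ℂ) by push_cast; ring]
        rw [Complex.norm_real, Real.norm_eq_abs, abs_of_pos (by positivity)]
      rw [h1, h2]
      rw [div_le_one (by positivity)]
      nlinarith [Real.pi_gt_three]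
    -- norm of the sum
    have habs_sinh : |Real.sinh (s*α)| = Real.sinh (s*a) := by
      rw [Real.abs_sinh, abs_mul, abs_of_pos hs]
    have hcosh_eq : Real.cosh (s*α) = Real.cosh (s*a) := by
      rw [← Real.cosh_abs, abs_mul, abs_of_pos hs]
    have hec : |Real.exp (-s) + c| ≤ s + (1+c) := by
      have h1 : Real.exp (-s) + c = (Real.exp (-s) - 1) + (1 + c) := by ring
      rw [h1]
      have h2 : |Real.exp (-s) - 1| ≤ s := by
        have h3 : Real.exp (-s) ≤ 1 := Real.exp_le_one_iff.2 (by linarith)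
        have h4 : 1 - s ≤ Real.exp (-s) := by
          have := Real.add_one_le_exp (-s); linarith
        rw [abs_le]; constructor <;> linarith
      calc |(Real.exp (-s) - 1) + (1 + c)| ≤ |Real.exp (-s) - 1| + |1 + c| := abs_add_le _ _
      _ ≤ s + (1+c) := by rw [abs_of_nonneg hδ0]; linarith
    have hB : ‖((Real.sin (π * |α|) * Real.exp (-s * |α|) : ℝ) : ℂ) +
              (Real.sin (α * π) : ℝ) *
                (((Real.exp (-s) + Real.cos (θ₁ - θ₂)) * Real.sinh (s * α) : ℝ) +
                  Complex.I * (Real.sin (θ₁ - θ₂) * Real.cosh (s * α) : ℝ)) /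
                ((Real.cosh s + Real.cos (θ₁ - θ₂) : ℝ) : ℂ)‖
        ≤ Real.exp (-a*s)
          + ((s + (1+c)) * Real.sinh (s*a) + |σ| * Real.cosh (s*a)) / (Real.cosh s + c) := by
      refine le_trans (norm_add_le _ _) (add_le_add ?_ ?_)
      · rw [Complex.norm_real, Real.norm_eq_abs, abs_mul, abs_of_pos (Real.exp_pos _)]
        calc |Real.sin (π * |α|)| * Real.exp (-s * |α|) ≤ 1 * Real.exp (-s * |α|) := by
              apply mul_le_mul_of_nonneg_right ?_ (Real.exp_pos _).le
              exact abs_le.2 ⟨Real.neg_one_le_sin _, Real.sin_le_one _⟩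
        _ = Real.exp (-a*s) := by rw [one_mul]; congr 1; ring
      · rw [norm_div, norm_mul, Complex.norm_real, Complex.norm_real]
        have hN : ‖(((Real.exp (-s) + Real.cos (θ₁ - θ₂)) * Real.sinh (s * α) : ℝ) : ℂ) +
              Complex.I * ((Real.sin (θ₁ - θ₂) * Real.cosh (s * α) : ℝ) : ℂ)‖
            ≤ (s + (1+c)) * Real.sinh (s*a) + |σ| * Real.cosh (s*a) := by
          refine le_trans (norm_add_le _ _) (add_le_add ?_ ?_)
          · rw [Complex.norm_real, Real.norm_eq_abs, abs_mul]
            rw [habs_sinh]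
            apply mul_le_mul_of_nonneg_right hec (Real.sinh_nonneg_iff.2 (by positivity))
          · rw [norm_mul, Complex.norm_I, one_mul, Complex.norm_real, Real.norm_eq_abs, abs_mul]
            rw [abs_of_pos (Real.cosh_pos _), hcosh_eq]
        have hsin1 : ‖Real.sin (α * π)‖ ≤ 1 := by
          rw [Real.norm_eq_abs]
          exact abs_le.2 ⟨Real.neg_one_le_sin _, Real.sin_le_one _⟩
        have hDnorm : ‖(Real.cosh s + Real.cos (θ₁ - θ₂) : ℝ)‖ = Real.cosh s + c := by
          rw [Real.norm_eq_abs, abs_of_pos hD0]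
        rw [hDnorm]
        have hnum : ‖Real.sin (α * π)‖ * ‖(((Real.exp (-s) + Real.cos (θ₁ - θ₂)) * Real.sinh (s * α) : ℝ) : ℂ) +
              Complex.I * ((Real.sin (θ₁ - θ₂) * Real.cosh (s * α) : ℝ) : ℂ)‖
            ≤ (s + (1+c)) * Real.sinh (s*a) + |σ| * Real.cosh (s*a) := by
          calc ‖Real.sin (α * π)‖ * ‖_‖ ≤ 1 * ((s + (1+c)) * Real.sinh (s*a) + |σ| * Real.cosh (s*a)) :=
            mul_le_mul hsin1 hN (norm_nonneg _) zero_le_one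
          _ = _ := one_mul _
        exact (div_le_div_iff_of_pos_right hD0).2 hnum
    -- combine
    have hfrac := aux_frac_bound hα0 hα1 hs hδ0 hδ2 (abs_nonneg σ) hσ1 hσ2 hD1 hD2
    calc ‖-(Complex.exp (-Complex.I * ↑α * (↑θ₁ - ↑θ₂) - Complex.I * ↑α₁₂) / (4 * (π:ℂ)^2)) *
            (((Real.sin (π * |α|) * Real.exp (-s * |α|) : ℝ) : ℂ) +
              ((Real.sin (α * π) : ℝ) : ℂ) *
                ((((Real.exp (-s) + Real.cos (θ₁ - θ₂)) * Real.sinh (s * α) : ℝ) : ℂ) +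
                  Complex.I * ((Real.sin (θ₁ - θ₂) * Real.cosh (s * α) : ℝ) : ℂ)) /
                ((Real.cosh s + Real.cos (θ₁ - θ₂) : ℝ) : ℂ))‖
        = ‖-(Complex.exp (-Complex.I * ↑α * (↑θ₁ - ↑θ₂) - Complex.I * ↑α₁₂) / (4 * (π:ℂ)^2))‖ *
          ‖(((Real.sin (π * |α|) * Real.exp (-s * |α|) : ℝ) : ℂ) +
              ((Real.sin (α * π) : ℝ) : ℂ) *
                ((((Real.exp (-s) + Real.cos (θ₁ - θ₂)) * Real.sinh (s * α) : ℝ) : ℂ) +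
                  Complex.I * ((Real.sin (θ₁ - θ₂) * Real.cosh (s * α) : ℝ) : ℂ)) /
                ((Real.cosh s + Real.cos (θ₁ - θ₂) : ℝ) : ℂ))‖ := norm_mul _ _
    _ ≤ 1 * (Real.exp (-a*s)
          + ((s + (1+c)) * Real.sinh (s*a) + |σ| * Real.cosh (s*a)) / (Real.cosh s + c)) :=
        mul_le_mul hA hB (norm_nonneg _) zero_le_one
    _ = Real.exp (-a*s)
          + ((s + (1+c)) * Real.sinh (s*a) + |σ| * Real.cosh (s*a)) / (Real.cosh s + c) := one_mul _
    _ ≤ Real.exp (-a*s) + ((4*Real.exp 4 + 8 + 4/(1-a)) * Real.exp (-((1-a)/2)*s)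
          + Real.exp 2 * (Real.sqrt (2*(1+c)) * (s^2/2 + (1+c))⁻¹)) := by linarith [hfrac]
    _ = g s := by rw [hg, hM]; ring
  -- measurability / integrability of the integrand
  have hcont : ContinuousOn (fun s : ℝ =>
      -(Complex.exp (-Complex.I * ↑α * (↑θ₁ - ↑θ₂) - Complex.I * ↑α₁₂) / (4 * (π:ℂ)^2)) *
            (((Real.sin (π * |α|) * Real.exp (-s * |α|) : ℝ) : ℂ) +
              ((Real.sin (α * π) : ℝ) : ℂ) *
                ((((Real.exp (-s) + Real.cos (θ₁ - θ₂)) * Real.sinh (s * α) : ℝ) : ℂ) +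
                  Complex.I * ((Real.sin (θ₁ - θ₂) * Real.cosh (s * α) : ℝ) : ℂ)) /
                ((Real.cosh s + Real.cos (θ₁ - θ₂) : ℝ) : ℂ))) (Set.Ioi 0) := by
    apply ContinuousOn.mul continuousOn_const
    apply ContinuousOn.add
    · apply Continuous.continuousOn
      fun_prop
    · apply ContinuousOn.div
      · apply Continuous.continuousOn
        fun_prop
      · apply Continuous.continuousOn
        fun_prop
      · intro x hx
        exact Complex.ofReal_ne_zero.2 (ne_of_gt (hDpos x hx))
  have hFmeas := (hcont.norm).aestronglyMeasurable (μ := volume) measurableSet_Ioi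
  have hFint : IntegrableOn (fun s : ℝ =>
      ‖-(Complex.exp (-Complex.I * ↑α * (↑θ₁ - ↑θ₂) - Complex.I * ↑α₁₂) / (4 * (π:ℂ)^2)) *
            (((Real.sin (π * |α|) * Real.exp (-s * |α|) : ℝ) : ℂ) +
              ((Real.sin (α * π) : ℝ) : ℂ) *
                ((((Real.exp (-s) + Real.cos (θ₁ - θ₂)) * Real.sinh (s * α) : ℝ) : ℂ) +
                  Complex.I * ((Real.sin (θ₁ - θ₂) * Real.cosh (s * α) : ℝ) : ℂ)) /
                ((Real.cosh s + Real.cos (θ₁ - θ₂) : ℝ) : ℂ))‖) (Set.Ioi 0) := by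
    apply hg_int.mono' hFmeas
    filter_upwards [MeasureTheory.ae_restrict_mem measurableSet_Ioi] with s hs
    rw [norm_norm]
    exact hpt s hs
  refine ⟨hFint, ?_⟩
  have hle := MeasureTheory.setIntegral_mono_on hFint hg_int measurableSet_Ioi hpt
  refine le_trans hle ?_
  have hgsum : (∫ s in Set.Ioi (0:ℝ), g s)
      = (∫ s in Set.Ioi (0:ℝ), Real.exp (-a*s))
        + (∫ s in Set.Ioi (0:ℝ), M * Real.exp (-((1-a)/2)*s))
        + (∫ s in Set.Ioi (0:ℝ), Real.exp 2 * (Real.sqrt (2*(1+c)) * (s^2/2 + (1+c))⁻¹)) := by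
    have e2 := MeasureTheory.integral_add ((hint1).add (hint2.const_mul M)) (hint3.const_mul (Real.exp 2))
    have e1 := MeasureTheory.integral_add hint1 (hint2.const_mul M)
    simp only [Pi.add_apply] at e2 e1
    simp only [hg]
    rw [e2, e1]
  rw [hgsum, hval1, MeasureTheory.integral_const_mul, MeasureTheory.integral_const_mul, hval2]
  have h1 : M * (1/((1-a)/2)) = M * (2/(1-a)) := by
    congr 1
    field_simp
  rw [h1]
  have h2 : Real.exp 2 * (∫ s in Set.Ioi (0:ℝ), Real.sqrt (2*(1+c)) * (s^2/2 + (1+c))⁻¹)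
      ≤ Real.exp 2 * π := mul_le_mul_of_nonneg_left hval3 (Real.exp_pos _).le
  rw [hC]
  linarith
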